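/- Define 𝓔_n^j = 𝓟_n^j/𝓠_n^j for n ≥ j. Then 𝓔_j^j = 0 and 𝓔_{n+1}^j = (z 𝓔_n^j + conj(a_n))/(1 + a_n z 𝓔_n^j), and each 𝓔_n^j is analytic on the closed unit disk with sup_{|z| ≤ 1} |𝓔_n^j(z)| < 1. -/

import Mathlib

open Complex ComplexConjugate Polynomial

/-- The column vectors `[𝓟_n^j; 𝓠_n^j]` of the ordered `2×2` matrix products
`∏^←_{k=j}^{n-1} (1/ρ_k) [[z, conj a_k], [a_k z, 1]]` applied to `[0; 1]`;
the argument `m` stands for `n - j`. -/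
noncomputable def schurPQ (a : ℕ → ℂ) (j : ℕ) : ℕ → Polynomial ℂ × Polynomial ℂ
  | 0 => (0, 1)
  | m + 1 =>
    let pq := schurPQ a j m
    let k := j + m
    (((Real.sqrt (1 - ‖a k‖ ^ 2) : ℝ) : ℂ)⁻¹ •
        (Polynomial.X * pq.1 + Polynomial.C (conj (a k)) * pq.2),
     ((Real.sqrt (1 - ‖a k‖ ^ 2) : ℝ) : ℂ)⁻¹ •
        (Polynomial.C (a k) * Polynomial.X * pq.1 + pq.2))

/-- The rational functions `𝓔_n^j = 𝓟_n^j / 𝓠_n^j`; the argument `m` stands for `n - j`. -/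
noncomputable def schurE (a : ℕ → ℂ) (j m : ℕ) (z : ℂ) : ℂ :=
  (schurPQ a j m).1.eval z / (schurPQ a j m).2.eval z

lemma schur_identity (α u : ℂ) :
    ‖1 + α*u‖^2 - ‖u + conj α‖^2 = (1-‖α‖^2)*(1-‖u‖^2) := by
  simp only [← Complex.normSq_eq_norm_sq]
  simp [Complex.normSq_apply, Complex.add_re, Complex.add_im, Complex.mul_re, Complex.mul_im]
  ring

lemma schur_eval_succ (a : ℕ → ℂ) (j m : ℕ) (z : ℂ) :
    (schurPQ a j (m+1)).1.eval z
      = ((Real.sqrt (1 - ‖a (j+m)‖ ^ 2) : ℝ) : ℂ)⁻¹ *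
          (z * (schurPQ a j m).1.eval z + conj (a (j+m)) * (schurPQ a j m).2.eval z) ∧
    (schurPQ a j (m+1)).2.eval z
      = ((Real.sqrt (1 - ‖a (j+m)‖ ^ 2) : ℝ) : ℂ)⁻¹ *
          (a (j+m) * z * (schurPQ a j m).1.eval z + (schurPQ a j m).2.eval z) := by
  constructor <;> · simp [schurPQ, smul_eq_mul]; ring

lemma schur_mobius (A u : ℂ) (c : ℝ) (hc0 : 0 ≤ c) (hc1 : c < 1)
    (hA1 : ‖A‖ < 1) (hu : ‖u‖ ≤ c) :
    (1 : ℂ) + A * u ≠ 0 ∧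
    ‖u + conj A‖ ≤ Real.sqrt (1 - (1 - ‖A‖^2) * (1 - c^2) / 4) * ‖1 + A * u‖ := by
  have hA0 : (0:ℝ) ≤ ‖A‖ := norm_nonneg _
  have hu0 : (0:ℝ) ≤ ‖u‖ := norm_nonneg _
  set d : ℝ := (1 - ‖A‖^2) * (1 - c^2) with hd
  have hdpos : 0 < d := by apply mul_pos <;> nlinarith
  have hd1 : d ≤ 1 := by
    have h1 : (1:ℝ) - ‖A‖^2 ≤ 1 := by nlinarith
    have h2 : (0:ℝ) ≤ 1 - c^2 := by nlinarith
    have h3 : (1:ℝ) - c^2 ≤ 1 := by nlinarith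
    nlinarith
  set c' : ℝ := Real.sqrt (1 - d/4) with hc'
  have hc'0 : 0 ≤ c' := Real.sqrt_nonneg _
  have hc'sq : c'^2 = 1 - d/4 := Real.sq_sqrt (by linarith)
  have hAu : ‖A * u‖ ≤ ‖A‖ * c := by
    rw [norm_mul]; exact mul_le_mul_of_nonneg_left hu hA0
  have hden_norm : 1 - ‖A‖ * c ≤ ‖1 + A * u‖ := by
    have h := norm_sub_norm_le (1:ℂ) (-(A*u))
    rw [sub_neg_eq_add, norm_neg, norm_one] at h
    linarith
  have hden_pos : 0 < ‖1 + A * u‖ := by nlinarith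
  have hden2 : ‖1 + A * u‖ ≤ 2 := by
    calc ‖1 + A*u‖ ≤ ‖(1:ℂ)‖ + ‖A*u‖ := norm_add_le _ _
      _ ≤ 2 := by rw [norm_one]; nlinarith
  refine ⟨norm_pos_iff.mp hden_pos, ?_⟩
  have hid := schur_identity A u
  have hmob_sq : ‖u + conj A‖^2 ≤ (c' * ‖1 + A*u‖)^2 := by
    have hu2 : ‖u‖^2 ≤ c^2 := by nlinarith
    have h1 : d ≤ (1 - ‖A‖^2) * (1 - ‖u‖^2) := by
      have := mul_nonneg (by nlinarith : (0:ℝ) ≤ 1 - ‖A‖^2)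
        (by nlinarith : (0:ℝ) ≤ c^2 - ‖u‖^2)
      nlinarith
    have h2 : ‖1 + A*u‖^2 ≤ 4 := by nlinarith
    rw [mul_pow, hc'sq]
    nlinarith
  have h := Real.sqrt_le_sqrt hmob_sq
  rwa [Real.sqrt_sq (norm_nonneg _),
    Real.sqrt_sq (mul_nonneg hc'0 (norm_nonneg _))] at h

lemma schur_key (a : ℕ → ℂ) (ha : ∀ k, ‖a k‖ < 1) (j : ℕ) : ∀ m : ℕ,
    ∃ c : ℝ, 0 ≤ c ∧ c < 1 ∧ ∀ z : ℂ, ‖z‖ ≤ 1 →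
      (schurPQ a j m).2.eval z ≠ 0 ∧
      ‖(schurPQ a j m).1.eval z‖ ≤ c * ‖(schurPQ a j m).2.eval z‖ := by
  intro m
  induction m with
  | zero =>
      exact ⟨0, le_refl _, one_pos, fun z _ => by simp [schurPQ]⟩
  | succ m ih =>
      obtain ⟨c, hc0, hc1, hc⟩ := ih
      have hA1 : ‖a (j+m)‖ < 1 := ha _
      refine ⟨Real.sqrt (1 - (1 - ‖a (j+m)‖^2) * (1 - c^2) / 4), Real.sqrt_nonneg _, ?_, ?_⟩
      · have hdpos : 0 < (1 - ‖a (j+m)‖^2) * (1 - c^2) := by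
          apply mul_pos <;> nlinarith [norm_nonneg (a (j+m))]
        have hd1 : (1 - ‖a (j+m)‖^2) * (1 - c^2) ≤ 1 := by
          have h1 : (1:ℝ) - ‖a (j+m)‖^2 ≤ 1 := by nlinarith [norm_nonneg (a (j+m))]
          have h2 : (0:ℝ) ≤ 1 - c^2 := by nlinarith
          have h3 : (1:ℝ) - c^2 ≤ 1 := by nlinarith
          nlinarith
        have hle : (0:ℝ) ≤ 1 - (1 - ‖a (j+m)‖^2) * (1 - c^2) / 4 := by linarith
        have hlt : 1 - (1 - ‖a (j+m)‖^2) * (1 - c^2) / 4 < 1 := by linarith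
        have := Real.sqrt_lt_sqrt hle hlt
        simpa using this
      · intro z hz
        obtain ⟨hQ, hPQ⟩ := hc z hz
        obtain ⟨hP', hQ'⟩ := schur_eval_succ a j m z
        set P : ℂ := (schurPQ a j m).1.eval z
        set Q : ℂ := (schurPQ a j m).2.eval z
        clear_value P Q
        have hQpos : 0 < ‖Q‖ := norm_pos_iff.mpr hQ
        have hunorm : ‖z * P / Q‖ ≤ c := by
          rw [norm_div, norm_mul, div_le_iff₀ hQpos]
          calc ‖z‖ * ‖P‖ ≤ 1 * (c * ‖Q‖) :=
                mul_le_mul hz hPQ (norm_nonneg _) zero_le_one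
            _ = c * ‖Q‖ := by ring
        obtain ⟨hden_ne, hmob⟩ := schur_mobius (a (j+m)) (z * P / Q) c hc0 hc1 hA1 hunorm
        have hρ : (0:ℝ) < Real.sqrt (1 - ‖a (j+m)‖^2) :=
          Real.sqrt_pos.mpr (by nlinarith [norm_nonneg (a (j+m))])
        have hρC : ((Real.sqrt (1 - ‖a (j+m)‖^2) : ℝ) : ℂ)⁻¹ ≠ 0 :=
          inv_ne_zero (Complex.ofReal_ne_zero.mpr hρ.ne')
        have hfac1 : z * P + conj (a (j+m)) * Q = Q * (z * P / Q + conj (a (j+m))) := by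
          field_simp
        have hfac2 : a (j+m) * z * P + Q = Q * (1 + a (j+m) * (z * P / Q)) := by
          field_simp; ring
        constructor
        · rw [hQ', hfac2]
          exact mul_ne_zero hρC (mul_ne_zero hQ hden_ne)
        · rw [hP', hQ', hfac1, hfac2]
          simp only [norm_mul]
          calc ‖((Real.sqrt (1 - ‖a (j+m)‖^2) : ℝ) : ℂ)⁻¹‖ * (‖Q‖ * ‖z * P / Q + conj (a (j+m))‖)
              ≤ ‖((Real.sqrt (1 - ‖a (j+m)‖^2) : ℝ) : ℂ)⁻¹‖ *
                  (‖Q‖ * (Real.sqrt (1 - (1 - ‖a (j+m)‖^2) * (1 - c^2) / 4) *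
                    ‖1 + a (j+m) * (z * P / Q)‖)) := by
                refine mul_le_mul_of_nonneg_left
                  (mul_le_mul_of_nonneg_left hmob (norm_nonneg _)) (norm_nonneg _)
            _ = Real.sqrt (1 - (1 - ‖a (j+m)‖^2) * (1 - c^2) / 4) *
                  (‖((Real.sqrt (1 - ‖a (j+m)‖^2) : ℝ) : ℂ)⁻¹‖ *
                    (‖Q‖ * ‖1 + a (j+m) * (z * P / Q)‖)) := by ring

theorem stmt11 (a : ℕ → ℂ) (ha : ∀ k, ‖a k‖ < 1) (j : ℕ) :
    (∀ z : ℂ, schurE a j 0 z = 0) ∧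
    (∀ m : ℕ, ∀ z : ℂ, ‖z‖ ≤ 1 →
      schurE a j (m + 1) z =
        (z * schurE a j m z + conj (a (j + m))) / (1 + a (j + m) * z * schurE a j m z)) ∧
    (∀ m : ℕ, ∀ z : ℂ, ‖z‖ ≤ 1 → (schurPQ a j m).2.eval z ≠ 0) ∧
    (∀ m : ℕ, ∃ c : ℝ, c < 1 ∧ ∀ z : ℂ, ‖z‖ ≤ 1 → ‖schurE a j m z‖ ≤ c) := by
  refine ⟨?_, ?_, ?_, ?_⟩
  · intro z; simp [schurE, schurPQ]
  · intro m z hz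
    obtain ⟨c, hc0, hc1, hc⟩ := schur_key a ha j m
    obtain ⟨hQ, hPQ⟩ := hc z hz
    obtain ⟨c₂, hc20, hc21, hc2⟩ := schur_key a ha j (m+1)
    obtain ⟨hQ1, -⟩ := hc2 z hz
    obtain ⟨hP', hQ'⟩ := schur_eval_succ a j m z
    rw [schurE, schurE, hP', hQ']
    set P : ℂ := (schurPQ a j m).1.eval z
    set Q : ℂ := (schurPQ a j m).2.eval z
    rw [hQ'] at hQ1
    clear_value P Q
    have hρ : (0:ℝ) < Real.sqrt (1 - ‖a (j+m)‖^2) :=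
      Real.sqrt_pos.mpr (by nlinarith [ha (j+m), norm_nonneg (a (j+m))])
    have hρC : ((Real.sqrt (1 - ‖a (j+m)‖^2) : ℝ) : ℂ)⁻¹ ≠ 0 :=
      inv_ne_zero (Complex.ofReal_ne_zero.mpr hρ.ne')
    have hden : a (j+m) * z * P + Q ≠ 0 := by
      intro h; exact hQ1 (by rw [h, mul_zero])
    rw [mul_div_mul_left _ _ hρC]
    have h1 : z * (P / Q) + conj (a (j+m)) = (z * P + conj (a (j+m)) * Q) / Q := by
      field_simp
    have h2 : 1 + a (j+m) * z * (P / Q) = (a (j+m) * z * P + Q) / Q := by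
      field_simp; ring
    rw [h1, h2, div_div_div_cancel_right₀ hQ]
  · intro m z hz
    exact ((schur_key a ha j m).choose_spec.2.2 z hz).1
  · intro m
    obtain ⟨c, hc0, hc1, hc⟩ := schur_key a ha j m
    refine ⟨c, hc1, fun z hz => ?_⟩
    obtain ⟨hQ, hPQ⟩ := hc z hz
    have hQpos : 0 < ‖(schurPQ a j m).2.eval z‖ := norm_pos_iff.mpr hQ
    rw [schurE, norm_div, div_le_iff₀ hQpos]
    exact hPQ
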